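/- Let α, β ∈ ℝ and define X : ℝ² → ℝ⁴ by X(u, v) := α·(u, v, −e^{−v}·sin u, e^{−v}·sin u) + β·(v, −u, e^{−v}·cos u, −e^{−v}·cos u) + (sinh u · sin u, sinh u · cos u, cosh u · sinh v, cosh u · cosh v). Then for all (u, v) ∈ ℝ²: (i) ⟨∂_u X, ∂_u X⟩ = ⟨∂_v X, ∂_v X⟩ = (α + cosh u · sin u)² + (−β + cosh u · cos u)² and ⟨∂_u X, ∂_v X⟩ = 0, where ⟨·,·⟩ is the Lorentz bilinear form on ℝ⁴; (ii) ∂_u∂_u X + ∂_v∂_v X = 2·cosh u · (cos u, −sin u, sinh v, cosh v), which is a nonzero Lorentz-null vector at every point of ℝ². In particular, if α² + β² < 1, then X is a conformal spacelike parametrization of a marginally trapped surface in Lorentz–Minkowski space 𝕃⁴ whose mean curvature vector vanishes nowhere. -/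

import Mathlib

/-- The Lorentz bilinear form on ℝ⁴ (Lorentz–Minkowski space 𝕃⁴). -/
def lorR (x y : Fin 4 → ℝ) : ℝ := x 0 * y 0 + x 1 * y 1 + x 2 * y 2 - x 3 * y 3

/-- Partial derivative of a map `ℝ² → ℝ⁴` in the first variable. -/
noncomputable def pd1 (X : ℝ → ℝ → Fin 4 → ℝ) (u v : ℝ) : Fin 4 → ℝ :=
  fun i => deriv (fun t => X t v i) u

/-- Partial derivative of a map `ℝ² → ℝ⁴` in the second variable. -/
noncomputable def pd2 (X : ℝ → ℝ → Fin 4 → ℝ) (u v : ℝ) : Fin 4 → ℝ :=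
  fun i => deriv (fun t => X u t i) v

/-- Second partial derivative `∂_u ∂_u` of a map `ℝ² → ℝ⁴`. -/
noncomputable def pd11 (X : ℝ → ℝ → Fin 4 → ℝ) (u v : ℝ) : Fin 4 → ℝ :=
  fun i => deriv (fun t => deriv (fun s => X s v i) t) u

/-- Second partial derivative `∂_v ∂_v` of a map `ℝ² → ℝ⁴`. -/
noncomputable def pd22 (X : ℝ → ℝ → Fin 4 → ℝ) (u v : ℝ) : Fin 4 → ℝ :=
  fun i => deriv (fun t => deriv (fun s => X u s i) t) v

lemma stmt19_exp (t : ℝ) : HasDerivAt (fun s : ℝ => Real.exp (-s)) (-Real.exp (-t)) t := by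
  have h := (Real.hasDerivAt_exp (-t)).comp t (hasDerivAt_neg t)
  simpa [Function.comp_def] using h

lemma stmt19_A0 (a C t : ℝ) :
    HasDerivAt (fun s : ℝ => a * s + C + Real.sinh s * Real.sin s)
      (a + (Real.cosh t * Real.sin t + Real.sinh t * Real.cos t)) t := by
  have h := (((hasDerivAt_id t).const_mul a).add_const C).add
    ((Real.hasDerivAt_sinh t).mul (Real.hasDerivAt_sin t))
  exact h.congr_deriv (by ring)

lemma stmt19_A0' (a t : ℝ) :
    HasDerivAt (fun s : ℝ => a + (Real.cosh s * Real.sin s + Real.sinh s * Real.cos s))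
      (2 * Real.cosh t * Real.cos t) t := by
  have h := (hasDerivAt_const t a).add
    (((Real.hasDerivAt_cosh t).mul (Real.hasDerivAt_sin t)).add
      ((Real.hasDerivAt_sinh t).mul (Real.hasDerivAt_cos t)))
  exact h.congr_deriv (by ring)

lemma stmt19_A1 (C b t : ℝ) :
    HasDerivAt (fun s : ℝ => C + b * -s + Real.sinh s * Real.cos s)
      (-b + (Real.cosh t * Real.cos t - Real.sinh t * Real.sin t)) t := by
  have h := ((hasDerivAt_const t C).add ((hasDerivAt_neg t).const_mul b)).add
    ((Real.hasDerivAt_sinh t).mul (Real.hasDerivAt_cos t))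
  exact h.congr_deriv (by ring)

lemma stmt19_A1' (b t : ℝ) :
    HasDerivAt (fun s : ℝ => -b + (Real.cosh s * Real.cos s - Real.sinh s * Real.sin s))
      (-(2 * Real.cosh t * Real.sin t)) t := by
  have h := (hasDerivAt_const t (-b)).add
    (((Real.hasDerivAt_cosh t).mul (Real.hasDerivAt_cos t)).sub
      ((Real.hasDerivAt_sinh t).mul (Real.hasDerivAt_sin t)))
  exact h.congr_deriv (by ring)

lemma stmt19_A2 (a b c K t : ℝ) :
    HasDerivAt (fun s : ℝ => a * (c * Real.sin s) + b * (c * Real.cos s) + Real.cosh s * K)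
      (a * (c * Real.cos t) + b * -(c * Real.sin t) + Real.sinh t * K) t := by
  have h := ((((Real.hasDerivAt_sin t).const_mul c).const_mul a).add
      (((Real.hasDerivAt_cos t).const_mul c).const_mul b)).add
      ((Real.hasDerivAt_cosh t).mul_const K)
  exact h.congr_deriv (by ring)

lemma stmt19_A2' (a b c K t : ℝ) :
    HasDerivAt (fun s : ℝ => a * (c * Real.cos s) + b * -(c * Real.sin s) + Real.sinh s * K)
      (a * -(c * Real.sin t) + b * -(c * Real.cos t) + Real.cosh t * K) t := by
  have h := ((((Real.hasDerivAt_cos t).const_mul c).const_mul a).add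
      ((((Real.hasDerivAt_sin t).const_mul c).neg).const_mul b)).add
      ((Real.hasDerivAt_sinh t).mul_const K)
  exact h.congr_deriv (by ring)

lemma stmt19_B0 (C b D t : ℝ) :
    HasDerivAt (fun s : ℝ => C + b * s + D) b t := by
  have h := (((hasDerivAt_const t C).add ((hasDerivAt_id t).const_mul b)).add_const D)
  exact h.congr_deriv (by ring)

lemma stmt19_B1 (a C D t : ℝ) :
    HasDerivAt (fun s : ℝ => a * s + C + D) a t := by
  have h := ((((hasDerivAt_id t).const_mul a).add_const C).add_const D)
  exact h.congr_deriv (by ring)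

lemma stmt19_B2 (a b P Q K t : ℝ) :
    HasDerivAt (fun s : ℝ => a * (Real.exp (-s) * P) + b * (Real.exp (-s) * Q) + K * Real.sinh s)
      (a * (-Real.exp (-t) * P) + b * (-Real.exp (-t) * Q) + K * Real.cosh t) t := by
  have h := ((((stmt19_exp t).mul_const P).const_mul a).add
      (((stmt19_exp t).mul_const Q).const_mul b)).add
      ((Real.hasDerivAt_sinh t).const_mul K)
  exact h.congr_deriv (by ring)

lemma stmt19_B2' (a b P Q K t : ℝ) :
    HasDerivAt (fun s : ℝ => a * (-Real.exp (-s) * P) + b * (-Real.exp (-s) * Q) + K * Real.cosh s)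
      (a * (Real.exp (-t) * P) + b * (Real.exp (-t) * Q) + K * Real.sinh t) t := by
  have h := (((((stmt19_exp t).neg).mul_const P).const_mul a).add
      ((((stmt19_exp t).neg).mul_const Q).const_mul b)).add
      ((Real.hasDerivAt_cosh t).const_mul K)
  exact h.congr_deriv (by ring)

lemma stmt19_B3 (a b P Q K t : ℝ) :
    HasDerivAt (fun s : ℝ => a * (Real.exp (-s) * P) + b * (Real.exp (-s) * Q) + K * Real.cosh s)
      (a * (-Real.exp (-t) * P) + b * (-Real.exp (-t) * Q) + K * Real.sinh t) t := by
  have h := ((((stmt19_exp t).mul_const P).const_mul a).add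
      (((stmt19_exp t).mul_const Q).const_mul b)).add
      ((Real.hasDerivAt_cosh t).const_mul K)
  exact h.congr_deriv (by ring)

lemma stmt19_B3' (a b P Q K t : ℝ) :
    HasDerivAt (fun s : ℝ => a * (-Real.exp (-s) * P) + b * (-Real.exp (-s) * Q) + K * Real.sinh s)
      (a * (Real.exp (-t) * P) + b * (Real.exp (-t) * Q) + K * Real.cosh t) t := by
  have h := (((((stmt19_exp t).neg).mul_const P).const_mul a).add
      ((((stmt19_exp t).neg).mul_const Q).const_mul b)).add
      ((Real.hasDerivAt_sinh t).const_mul K)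
  exact h.congr_deriv (by ring)

/-- A two-parameter family of conformal spacelike parametrizations of marginally
trapped surfaces in 𝕃⁴ with nowhere vanishing mean curvature vector. -/
theorem stmt_19 (α β : ℝ) (X : ℝ → ℝ → Fin 4 → ℝ)
    (hX : ∀ (u v : ℝ), X u v = fun i =>
      α * ![u, v, -(Real.exp (-v) * Real.sin u), Real.exp (-v) * Real.sin u] i
      + β * ![v, -u, Real.exp (-v) * Real.cos u, -(Real.exp (-v) * Real.cos u)] i
      + ![Real.sinh u * Real.sin u, Real.sinh u * Real.cos u,
          Real.cosh u * Real.sinh v, Real.cosh u * Real.cosh v] i) :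
    (∀ (u v : ℝ), lorR (pd1 X u v) (pd1 X u v)
        = (α + Real.cosh u * Real.sin u) ^ 2 + (-β + Real.cosh u * Real.cos u) ^ 2) ∧
    (∀ (u v : ℝ), lorR (pd2 X u v) (pd2 X u v)
        = (α + Real.cosh u * Real.sin u) ^ 2 + (-β + Real.cosh u * Real.cos u) ^ 2) ∧
    (∀ (u v : ℝ), lorR (pd1 X u v) (pd2 X u v) = 0) ∧
    (∀ (u v : ℝ), (∀ i, pd11 X u v i + pd22 X u v i
        = 2 * Real.cosh u * ![Real.cos u, -Real.sin u, Real.sinh v, Real.cosh v] i) ∧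
      lorR (fun i => pd11 X u v i + pd22 X u v i)
        (fun i => pd11 X u v i + pd22 X u v i) = 0 ∧
      (fun i => pd11 X u v i + pd22 X u v i) ≠ (0 : Fin 4 → ℝ)) ∧
    (α ^ 2 + β ^ 2 < 1 → ∀ (u v : ℝ),
      0 < (α + Real.cosh u * Real.sin u) ^ 2 + (-β + Real.cosh u * Real.cos u) ^ 2) := by
  -- component functions in the `u` direction
  have eu0 : ∀ v : ℝ, (fun t => X t v 0)
      = fun s => α * s + β * v + Real.sinh s * Real.sin s := by
    intro v; funext t; rw [hX]; norm_num
  have eu1 : ∀ v : ℝ, (fun t => X t v 1)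
      = fun s => α * v + β * -s + Real.sinh s * Real.cos s := by
    intro v; funext t; rw [hX]; norm_num
  have eu2 : ∀ v : ℝ, (fun t => X t v 2)
      = fun s => (-α) * (Real.exp (-v) * Real.sin s) + β * (Real.exp (-v) * Real.cos s)
          + Real.cosh s * Real.sinh v := by
    intro v; funext t; rw [hX]; norm_num [Matrix.cons_val_two, Matrix.cons_val_three, Matrix.vecHead, Matrix.vecTail] <;> ring
  have eu3 : ∀ v : ℝ, (fun t => X t v 3)
      = fun s => α * (Real.exp (-v) * Real.sin s) + (-β) * (Real.exp (-v) * Real.cos s)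
          + Real.cosh s * Real.cosh v := by
    intro v; funext t; rw [hX]; norm_num [Matrix.cons_val_two, Matrix.cons_val_three, Matrix.vecHead, Matrix.vecTail] <;> ring
  -- component functions in the `v` direction
  have ev0 : ∀ u : ℝ, (fun t => X u t 0)
      = fun s => α * u + β * s + Real.sinh u * Real.sin u := by
    intro u; funext t; rw [hX]; norm_num
  have ev1 : ∀ u : ℝ, (fun t => X u t 1)
      = fun s => β * -u + α * s + Real.sinh u * Real.cos u := by
    intro u; funext t; rw [hX]; norm_num <;> ring
  have ev2 : ∀ u : ℝ, (fun t => X u t 2)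
      = fun s => (-α) * (Real.exp (-s) * Real.sin u) + β * (Real.exp (-s) * Real.cos u)
          + Real.cosh u * Real.sinh s := by
    intro u; funext t; rw [hX]; norm_num [Matrix.cons_val_two, Matrix.cons_val_three, Matrix.vecHead, Matrix.vecTail] <;> ring
  have ev3 : ∀ u : ℝ, (fun t => X u t 3)
      = fun s => α * (Real.exp (-s) * Real.sin u) + (-β) * (Real.exp (-s) * Real.cos u)
          + Real.cosh u * Real.cosh s := by
    intro u; funext t; rw [hX]; norm_num [Matrix.cons_val_two, Matrix.cons_val_three, Matrix.vecHead, Matrix.vecTail] <;> ring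
  -- first partials
  have hp1_0 : ∀ u v : ℝ, pd1 X u v 0
      = α + (Real.cosh u * Real.sin u + Real.sinh u * Real.cos u) := by
    intro u v; show deriv (fun t => X t v 0) u = _
    rw [eu0 v]; exact (stmt19_A0 α (β * v) u).deriv
  have hp1_1 : ∀ u v : ℝ, pd1 X u v 1
      = -β + (Real.cosh u * Real.cos u - Real.sinh u * Real.sin u) := by
    intro u v; show deriv (fun t => X t v 1) u = _
    rw [eu1 v]; exact (stmt19_A1 (α * v) β u).deriv
  have hp1_2 : ∀ u v : ℝ, pd1 X u v 2
      = (-α) * (Real.exp (-v) * Real.cos u) + β * -(Real.exp (-v) * Real.sin u)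
        + Real.sinh u * Real.sinh v := by
    intro u v; show deriv (fun t => X t v 2) u = _
    rw [eu2 v]; exact (stmt19_A2 (-α) β (Real.exp (-v)) (Real.sinh v) u).deriv
  have hp1_3 : ∀ u v : ℝ, pd1 X u v 3
      = α * (Real.exp (-v) * Real.cos u) + (-β) * -(Real.exp (-v) * Real.sin u)
        + Real.sinh u * Real.cosh v := by
    intro u v; show deriv (fun t => X t v 3) u = _
    rw [eu3 v]; exact (stmt19_A2 α (-β) (Real.exp (-v)) (Real.cosh v) u).deriv
  -- second partials (uu)
  have hp11_0 : ∀ u v : ℝ, pd11 X u v 0 = 2 * Real.cosh u * Real.cos u := by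
    intro u v; show deriv (fun t => deriv (fun s => X s v 0) t) u = _
    have e : (fun t => deriv (fun s => X s v 0) t)
        = fun s => α + (Real.cosh s * Real.sin s + Real.sinh s * Real.cos s) := by
      funext t; rw [eu0 v]; exact (stmt19_A0 α (β * v) t).deriv
    rw [e]; exact (stmt19_A0' α u).deriv
  have hp11_1 : ∀ u v : ℝ, pd11 X u v 1 = -(2 * Real.cosh u * Real.sin u) := by
    intro u v; show deriv (fun t => deriv (fun s => X s v 1) t) u = _
    have e : (fun t => deriv (fun s => X s v 1) t)
        = fun s => -β + (Real.cosh s * Real.cos s - Real.sinh s * Real.sin s) := by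
      funext t; rw [eu1 v]; exact (stmt19_A1 (α * v) β t).deriv
    rw [e]; exact (stmt19_A1' β u).deriv
  have hp11_2 : ∀ u v : ℝ, pd11 X u v 2
      = (-α) * -(Real.exp (-v) * Real.sin u) + β * -(Real.exp (-v) * Real.cos u)
        + Real.cosh u * Real.sinh v := by
    intro u v; show deriv (fun t => deriv (fun s => X s v 2) t) u = _
    have e : (fun t => deriv (fun s => X s v 2) t)
        = fun s => (-α) * (Real.exp (-v) * Real.cos s) + β * -(Real.exp (-v) * Real.sin s)
            + Real.sinh s * Real.sinh v := by
      funext t; rw [eu2 v]; exact (stmt19_A2 (-α) β (Real.exp (-v)) (Real.sinh v) t).deriv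
    rw [e]; exact (stmt19_A2' (-α) β (Real.exp (-v)) (Real.sinh v) u).deriv
  have hp11_3 : ∀ u v : ℝ, pd11 X u v 3
      = α * -(Real.exp (-v) * Real.sin u) + (-β) * -(Real.exp (-v) * Real.cos u)
        + Real.cosh u * Real.cosh v := by
    intro u v; show deriv (fun t => deriv (fun s => X s v 3) t) u = _
    have e : (fun t => deriv (fun s => X s v 3) t)
        = fun s => α * (Real.exp (-v) * Real.cos s) + (-β) * -(Real.exp (-v) * Real.sin s)
            + Real.sinh s * Real.cosh v := by
      funext t; rw [eu3 v]; exact (stmt19_A2 α (-β) (Real.exp (-v)) (Real.cosh v) t).deriv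
    rw [e]; exact (stmt19_A2' α (-β) (Real.exp (-v)) (Real.cosh v) u).deriv
  -- first partials in v
  have hp2_0 : ∀ u v : ℝ, pd2 X u v 0 = β := by
    intro u v; show deriv (fun t => X u t 0) v = _
    rw [ev0 u]; exact (stmt19_B0 (α * u) β (Real.sinh u * Real.sin u) v).deriv
  have hp2_1 : ∀ u v : ℝ, pd2 X u v 1 = α := by
    intro u v; show deriv (fun t => X u t 1) v = _
    rw [ev1 u]; exact (stmt19_B0 (β * -u) α (Real.sinh u * Real.cos u) v).deriv
  have hp2_2 : ∀ u v : ℝ, pd2 X u v 2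
      = (-α) * (-Real.exp (-v) * Real.sin u) + β * (-Real.exp (-v) * Real.cos u)
        + Real.cosh u * Real.cosh v := by
    intro u v; show deriv (fun t => X u t 2) v = _
    rw [ev2 u]; exact (stmt19_B2 (-α) β (Real.sin u) (Real.cos u) (Real.cosh u) v).deriv
  have hp2_3 : ∀ u v : ℝ, pd2 X u v 3
      = α * (-Real.exp (-v) * Real.sin u) + (-β) * (-Real.exp (-v) * Real.cos u)
        + Real.cosh u * Real.sinh v := by
    intro u v; show deriv (fun t => X u t 3) v = _
    rw [ev3 u]; exact (stmt19_B3 α (-β) (Real.sin u) (Real.cos u) (Real.cosh u) v).deriv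
  -- second partials (vv)
  have hp22_0 : ∀ u v : ℝ, pd22 X u v 0 = 0 := by
    intro u v; show deriv (fun t => deriv (fun s => X u s 0) t) v = _
    have e : (fun t => deriv (fun s => X u s 0) t) = fun _ => β := by
      funext t; rw [ev0 u]; exact (stmt19_B0 (α * u) β (Real.sinh u * Real.sin u) t).deriv
    rw [e]; exact deriv_const v β
  have hp22_1 : ∀ u v : ℝ, pd22 X u v 1 = 0 := by
    intro u v; show deriv (fun t => deriv (fun s => X u s 1) t) v = _
    have e : (fun t => deriv (fun s => X u s 1) t) = fun _ => α := by
      funext t; rw [ev1 u]; exact (stmt19_B0 (β * -u) α (Real.sinh u * Real.cos u) t).deriv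
    rw [e]; exact deriv_const v α
  have hp22_2 : ∀ u v : ℝ, pd22 X u v 2
      = (-α) * (Real.exp (-v) * Real.sin u) + β * (Real.exp (-v) * Real.cos u)
        + Real.cosh u * Real.sinh v := by
    intro u v; show deriv (fun t => deriv (fun s => X u s 2) t) v = _
    have e : (fun t => deriv (fun s => X u s 2) t)
        = fun s => (-α) * (-Real.exp (-s) * Real.sin u) + β * (-Real.exp (-s) * Real.cos u)
            + Real.cosh u * Real.cosh s := by
      funext t; rw [ev2 u]
      exact (stmt19_B2 (-α) β (Real.sin u) (Real.cos u) (Real.cosh u) t).deriv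
    rw [e]; exact (stmt19_B2' (-α) β (Real.sin u) (Real.cos u) (Real.cosh u) v).deriv
  have hp22_3 : ∀ u v : ℝ, pd22 X u v 3
      = α * (Real.exp (-v) * Real.sin u) + (-β) * (Real.exp (-v) * Real.cos u)
        + Real.cosh u * Real.cosh v := by
    intro u v; show deriv (fun t => deriv (fun s => X u s 3) t) v = _
    have e : (fun t => deriv (fun s => X u s 3) t)
        = fun s => α * (-Real.exp (-s) * Real.sin u) + (-β) * (-Real.exp (-s) * Real.cos u)
            + Real.cosh u * Real.sinh s := by
      funext t; rw [ev3 u]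
      exact (stmt19_B3 α (-β) (Real.sin u) (Real.cos u) (Real.cosh u) t).deriv
    rw [e]; exact (stmt19_B3' α (-β) (Real.sin u) (Real.cos u) (Real.cosh u) v).deriv
  -- identities
  have h3 : ∀ v : ℝ, Real.exp (-v) * Real.exp v = 1 := by
    intro v; rw [← Real.exp_add]; norm_num
  refine ⟨?_, ?_, ?_, ?_, ?_⟩
  · intro u v
    have h1 := Real.sin_sq_add_cos_sq u
    have h2 := Real.cosh_sq_sub_sinh_sq v
    have h4 := Real.sinh_add_cosh v
    simp only [lorR]
    rw [hp1_0 u v, hp1_1 u v, hp1_2 u v, hp1_3 u v]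
    linear_combination (Real.sinh u ^ 2) * h1 - (Real.sinh u ^ 2) * h2
      - (2 * Real.sinh u * (α * Real.cos u + β * Real.sin u)) * h3 v
      - (2 * Real.sinh u * (α * Real.cos u + β * Real.sin u) * Real.exp (-v)) * h4
  · intro u v
    have h1 := Real.sin_sq_add_cos_sq u
    have h2 := Real.cosh_sq_sub_sinh_sq v
    have h4 := Real.sinh_add_cosh v
    simp only [lorR]
    rw [hp2_0 u v, hp2_1 u v, hp2_2 u v, hp2_3 u v]
    linear_combination (-(Real.cosh u ^ 2)) * h1 + (Real.cosh u ^ 2) * h2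
      + (2 * Real.cosh u * (α * Real.sin u - β * Real.cos u)) * h3 v
      + (2 * Real.cosh u * (α * Real.sin u - β * Real.cos u) * Real.exp (-v)) * h4
  · intro u v
    have h4 := Real.sinh_add_cosh v
    simp only [lorR]
    rw [hp1_0 u v, hp1_1 u v, hp1_2 u v, hp1_3 u v,
        hp2_0 u v, hp2_1 u v, hp2_2 u v, hp2_3 u v]
    linear_combination (-(Real.cosh u * (α * Real.cos u + β * Real.sin u)
        - Real.sinh u * (α * Real.sin u - β * Real.cos u))) * h3 v
      - ((Real.cosh u * (α * Real.cos u + β * Real.sin u)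
        - Real.sinh u * (α * Real.sin u - β * Real.cos u)) * Real.exp (-v)) * h4
  · intro u v
    have hsum : ∀ i, pd11 X u v i + pd22 X u v i
        = 2 * Real.cosh u * ![Real.cos u, -Real.sin u, Real.sinh v, Real.cosh v] i := by
      intro i
      fin_cases i
      · show pd11 X u v 0 + pd22 X u v 0 = _
        rw [hp11_0 u v, hp22_0 u v]; norm_num
      · show pd11 X u v 1 + pd22 X u v 1 = _
        rw [hp11_1 u v, hp22_1 u v]; norm_num <;> ring
      · show pd11 X u v 2 + pd22 X u v 2 = _
        rw [hp11_2 u v, hp22_2 u v]; norm_num <;> ring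
      · show pd11 X u v 3 + pd22 X u v 3 = _
        rw [hp11_3 u v, hp22_3 u v]; norm_num <;> ring
    refine ⟨hsum, ?_, ?_⟩
    · have h1 := Real.sin_sq_add_cos_sq u
      have h2 := Real.cosh_sq_sub_sinh_sq v
      simp only [lorR]
      rw [hsum 0, hsum 1, hsum 2, hsum 3]
      norm_num [Matrix.cons_val_two, Matrix.cons_val_three, Matrix.vecHead, Matrix.vecTail]
      linear_combination (4 * Real.cosh u ^ 2) * h1 - (4 * Real.cosh u ^ 2) * h2
    · intro hc
      have h := congrFun hc 3
      simp only [Pi.zero_apply] at h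
      rw [hsum 3] at h
      norm_num [Matrix.cons_val_two, Matrix.cons_val_three, Matrix.vecHead, Matrix.vecTail] at h
      have hcu := Real.cosh_pos (x := u)
      have hcv := Real.cosh_pos (x := v)
      rcases h with h | h <;> linarith
  · intro hlt u v
    by_contra hle
    push_neg at hle
    have hA : (α + Real.cosh u * Real.sin u) ^ 2 = 0 := by
      nlinarith [sq_nonneg (α + Real.cosh u * Real.sin u),
        sq_nonneg (-β + Real.cosh u * Real.cos u)]
    have hB : (-β + Real.cosh u * Real.cos u) ^ 2 = 0 := by
      nlinarith [sq_nonneg (α + Real.cosh u * Real.sin u),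
        sq_nonneg (-β + Real.cosh u * Real.cos u)]
    have hA' : α + Real.cosh u * Real.sin u = 0 := by
      exact pow_eq_zero_iff (n := 2) (by norm_num) |>.mp hA
    have hB' : -β + Real.cosh u * Real.cos u = 0 := by
      exact pow_eq_zero_iff (n := 2) (by norm_num) |>.mp hB
    have key : (Real.cosh u * Real.sin u) ^ 2 + (Real.cosh u * Real.cos u) ^ 2
        = Real.cosh u ^ 2 := by
      linear_combination (Real.cosh u ^ 2) * Real.sin_sq_add_cos_sq u
    have hc1 : 1 ≤ Real.cosh u := Real.one_le_cosh u
    have hα2 : α ^ 2 = (Real.cosh u * Real.sin u) ^ 2 := by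
      have h : α = -(Real.cosh u * Real.sin u) := by linarith
      rw [h]; ring_nf
    have hβ2 : β ^ 2 = (Real.cosh u * Real.cos u) ^ 2 := by
      have h : β = Real.cosh u * Real.cos u := by linarith
      rw [h]
    have hcsq : 1 ≤ Real.cosh u ^ 2 := by nlinarith [sq_nonneg (Real.cosh u - 1)]
    linarith [key, hα2, hβ2, hcsq]
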